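/- For t > 0, let μ_t be the probability measure on ℝ with density x ↦ 1/(π√(2t − x²)) on the interval (−√(2t), √(2t)) (the arcsine law). Then the reciprocal Cauchy transform of μ_t satisfies H_{μ_t}(z) = √(z² − 2t) for all z ∈ ℂ⁺, where the square root is the analytic branch on ℂ⁺ with H_{μ_t}(z) ~ z at infinity. Equivalently, ∫ (z−x)⁻¹ dμ_t(x) = 1/√(z² − 2t). -/

import Mathlib

open MeasureTheory Complex Metric Real
open scoped ENNReal NNReal

-- basic facts about z, w
lemma aux_abs_lt (r : ℝ) (hr : 0 < r) (z w : ℂ) (hz : 0 < z.im) (hw : 0 < w.im)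
    (hw2 : w ^ 2 = z ^ 2 - (r:ℂ) ^ 2) : ‖z - w‖ < r ∧ r < ‖z + w‖ := by
  have him : w.re * w.im = z.re * z.im := by
    have := congrArg Complex.im hw2
    simp [Complex.sub_im, Complex.mul_im, pow_two] at this
    nlinarith [this]
  have hrecross : 0 < z.re * w.re + z.im * w.im := by
    have h1 : 0 ≤ z.re * w.re := by
      rcases le_or_gt 0 w.re with h | h
      · have : 0 ≤ z.re := by nlinarith
        positivity
      · have : z.re ≤ 0 := by nlinarith
        nlinarith
    nlinarith
  have hlt : ‖z - w‖ < ‖z + w‖ := by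
    have := Complex.sq_norm (z - w)
    have := Complex.sq_norm (z + w)
    have h1 : Complex.normSq (z - w) < Complex.normSq (z + w) := by
      simp [Complex.normSq_apply, Complex.sub_re, Complex.sub_im, Complex.add_re, Complex.add_im]
      nlinarith
    have h2 := norm_nonneg (z - w)
    have h3 := norm_nonneg (z + w)
    nlinarith [Complex.sq_norm (z - w), Complex.sq_norm (z + w)]
  have hprod : ‖z - w‖ * ‖z + w‖ = r ^ 2 := by
    rw [← norm_mul]
    have : (z - w) * (z + w) = (r:ℂ)^2 := by ring_nf; linear_combination -hw2
    rw [this]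
    simp [norm_pow, abs_of_pos hr]

  constructor
  · nlinarith [norm_nonneg (z - w), norm_nonneg (z + w)]
  · nlinarith [norm_nonneg (z - w), norm_nonneg (z + w)]

lemma aux_pointwise (r : ℝ) (hr : 0 < r) (z w : ℂ) (hz : 0 < z.im)
    (hw2 : w ^ 2 = z ^ 2 - (r:ℂ) ^ 2) (θ : ℝ) :
    circleMap 0 1 θ * I * ((circleMap 0 1 θ - I*(z-w)/r)⁻¹ * ((-2/(r:ℂ)) * (circleMap 0 1 θ - I*(z+w)/r)⁻¹))
      = (z - ((r * Real.sin θ : ℝ) : ℂ))⁻¹ := by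
  obtain ⟨u, hu⟩ : ∃ u, circleMap 0 1 θ = u := ⟨_, rfl⟩
  rw [hu]
  have hu0 : u ≠ 0 := by
    intro h
    have : ‖u‖ = |(1:ℝ)| := by rw [← hu]; exact norm_circleMap_zero 1 θ
    rw [h] at this; simp at this
  have hr0 : (r:ℂ) ≠ 0 := by exact_mod_cast hr.ne'
  have hsin : Complex.sin (θ:ℂ) = (u⁻¹ - u) * I / 2 := by
    show (Complex.exp (-(θ:ℂ) * I) - Complex.exp ((θ:ℂ) * I)) * I / 2 = _
    have h1 : u = Complex.exp ((θ:ℂ) * I) := by rw [← hu]; simp [circleMap]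
    rw [h1, ← Complex.exp_neg]
    ring_nf
  have hne : z - ((r * Real.sin θ : ℝ) : ℂ) ≠ 0 := by
    intro h
    have := congrArg Complex.im h
    simp at this; linarith
  have key : (z - ((r * Real.sin θ : ℝ) : ℂ)) * (u * I * (-2/(r:ℂ))) =
      (u - I*(z-w)/r) * (u - I*(z+w)/r) := by
    push_cast
    rw [hsin]
    have huu : u * u⁻¹ = 1 := mul_inv_cancel₀ hu0
    field_simp
    ring_nf
    simp only [Complex.I_sq]
    ring_nf
    linear_combination (-1:ℂ) * hw2
  have hmul : u * I * (-2/(r:ℂ)) ≠ 0 := by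
    apply mul_ne_zero (mul_ne_zero hu0 I_ne_zero); simp [hr0]
  have hprod : (u - I*(z-w)/r) * (u - I*(z+w)/r) ≠ 0 := by
    rw [← key]; exact mul_ne_zero hne hmul
  obtain ⟨ha, hb⟩ := mul_ne_zero_iff.mp hprod
  have goal' : (u * I * ((u - I*(z-w)/r)⁻¹ * ((-2/(r:ℂ)) * (u - I*(z+w)/r)⁻¹))) *
      (z - ((r * Real.sin θ : ℝ) : ℂ)) = 1 := by
    have e1 : u * I * ((u - I*(z-w)/r)⁻¹ * ((-2/(r:ℂ)) * (u - I*(z+w)/r)⁻¹)) *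
        (z - ((r * Real.sin θ : ℝ) : ℂ)) =
        ((z - ((r * Real.sin θ : ℝ) : ℂ)) * (u * I * (-2/(r:ℂ)))) *
          ((u - I*(z-w)/r) * (u - I*(z+w)/r))⁻¹ := by
      rw [mul_inv]; ring
    rw [e1, key]
    exact mul_inv_cancel₀ hprod
  exact (inv_eq_of_mul_eq_one_left goal').symm

lemma aux_circle (r : ℝ) (hr : 0 < r) (z w : ℂ) (hz : 0 < z.im) (hw : 0 < w.im)
    (hw2 : w ^ 2 = z ^ 2 - (r:ℂ) ^ 2) :
    ∫ θ in (0:ℝ)..(2*π), (z - ((r * Real.sin θ : ℝ) : ℂ))⁻¹ = 2 * π / w := by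
  obtain ⟨hlt, hgt⟩ := aux_abs_lt r hr z w hz hw hw2
  have hr0 : (r:ℂ) ≠ 0 := by exact_mod_cast hr.ne'
  have hw0 : w ≠ 0 := by intro h; rw [h] at hw; simp at hw
  set a : ℂ := I*(z-w)/r with ha
  set b : ℂ := I*(z+w)/r with hb
  have ha_abs : ‖a‖ = ‖z-w‖ / r := by
    simp [ha, norm_div, norm_mul, Complex.norm_I, abs_of_pos hr]
  have hb_abs : ‖b‖ = ‖z+w‖ / r := by
    simp [hb, norm_div, norm_mul, Complex.norm_I, abs_of_pos hr]
  have ha_mem : a ∈ ball (0:ℂ) 1 := by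
    simp only [mem_ball, dist_zero_right, ha_abs]
    rw [div_lt_one hr]; exact hlt
  have hb_out : ∀ x ∈ closedBall (0:ℂ) 1, x ≠ b := by
    intro x hx h
    rw [mem_closedBall, dist_zero_right, h, hb_abs] at hx
    rw [← not_lt] at hx
    exact hx ((one_lt_div hr).mpr hgt)
  set f : ℂ → ℂ := fun u => (-2/(r:ℂ)) * (u - b)⁻¹ with hf
  have hdiff : DiffContOnCl ℂ f (ball 0 1) := by
    apply DifferentiableOn.diffContOnCl
    rw [closure_ball (0:ℂ) one_ne_zero]
    exact (differentiableOn_const _).mul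
      (((differentiableOn_id.sub (differentiableOn_const b))).inv
        (fun x hx => sub_ne_zero.mpr (hb_out x hx)))
  have hC := hdiff.circleIntegral_sub_inv_smul ha_mem
  have hRHS : (2 * (π:ℝ) * I) • f a = 2 * π / w := by
    have hab : a - b = -2 * I * w / r := by rw [ha, hb]; ring
    rw [hf]
    simp only [smul_eq_mul, hab]
    field_simp
  have hLHS : (∮ ζ in C(0, 1), (ζ - a)⁻¹ • f ζ)
      = ∫ θ in (0:ℝ)..(2*π), (z - ((r * Real.sin θ : ℝ) : ℂ))⁻¹ := by
    rw [circleIntegral]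
    apply intervalIntegral.integral_congr
    intro θ _
    simp only [deriv_circleMap, smul_eq_mul, hf]
    have := aux_pointwise r hr z w hz hw2 θ
    rw [← this]
  rw [← hLHS, hC, hRHS]

lemma aux_half (r : ℝ) (hr : 0 < r) (z w : ℂ) (hz : 0 < z.im) (hw : 0 < w.im)
    (hw2 : w ^ 2 = z ^ 2 - (r:ℂ) ^ 2) :
    ∫ θ in (-(π/2))..(π/2), (z - ((r * Real.sin θ : ℝ) : ℂ))⁻¹ = π / w := by
  set h : ℝ → ℂ := fun θ => (z - ((r * Real.sin θ : ℝ) : ℂ))⁻¹ with hh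
  have hcont : Continuous h := by
    apply Continuous.inv₀
    · exact continuous_const.sub (Complex.continuous_ofReal.comp
        (continuous_const.mul Real.continuous_sin))
    · intro x
      intro hcc
      have := congrArg Complex.im hcc
      simp at this; linarith
  have hint : ∀ a b : ℝ, IntervalIntegrable h volume a b :=
    fun a b => hcont.intervalIntegrable a b
  have hper : Function.Periodic h (2*π) := by
    intro θ; simp only [hh, Real.sin_periodic θ]
  have h1 : ∫ θ in (-(π/2))..(-(π/2)+2*π), h θ = ∫ θ in (0:ℝ)..(0+2*π), h θ :=
    hper.intervalIntegral_add_eq (-(π/2)) 0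
  have h2 : ∫ θ in (π/2)..(3*π/2), h θ = ∫ θ in (-(π/2))..(π/2), h θ := by
    have e1 : ∀ x : ℝ, h (π - x) = h x := by
      intro x; simp only [hh, Real.sin_pi_sub]
    have := intervalIntegral.integral_comp_sub_left (a := π/2) (b := 3*π/2) h π
    rw [show π - 3*π/2 = -(π/2) by ring, show π - π/2 = π/2 by ring] at this
    rw [← this]
    exact intervalIntegral.integral_congr (fun x _ => (e1 x).symm)
  have h3 : (∫ θ in (-(π/2))..(π/2), h θ) + ∫ θ in (π/2)..(3*π/2), h θ
      = ∫ θ in (-(π/2))..(3*π/2), h θ :=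
    intervalIntegral.integral_add_adjacent_intervals (hint _ _) (hint _ _)
  have h4 : ∫ θ in (-(π/2))..(3*π/2), h θ = 2 * π / w := by
    rw [show (3*π/2 : ℝ) = -(π/2) + 2*π by ring, h1, zero_add]
    exact aux_circle r hr z w hz hw hw2
  rw [h2] at h3
  rw [h4] at h3
  have : (2:ℂ) * (∫ θ in (-(π/2))..(π/2), h θ) = 2 * π / w := by
    rw [← h3]; ring
  linear_combination (2⁻¹ : ℂ) * this

/-- The arcsine law `μ_t` with density `1/(π √(2t − x²))` on `(−√(2t), √(2t))` has Cauchy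
transform `G_{μ_t}(z) = 1/√(z² − 2t)` on `ℂ⁺`, where the square root is the analytic
branch on `ℂ⁺` with positive imaginary part (i.e. `H_{μ_t}(z) = √(z² − 2t)`). -/
theorem arcsine_cauchy_transform
    (t : ℝ) (ht : 0 < t) (μ : Measure ℝ)
    (hμ : μ = (volume.restrict
        (Set.Ioo (-Real.sqrt (2 * t)) (Real.sqrt (2 * t)))).withDensity
        (fun x => ENNReal.ofReal (1 / (Real.pi * Real.sqrt (2 * t - x ^ 2)))))
    (z w : ℂ) (hz : 0 < z.im) (hw : 0 < w.im) (hw2 : w ^ 2 = z ^ 2 - 2 * (t : ℂ)) :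
    ∫ x : ℝ, (z - (x : ℂ))⁻¹ ∂μ = w⁻¹ := by
  set r : ℝ := Real.sqrt (2 * t) with hrdef
  have hr : 0 < r := Real.sqrt_pos.mpr (by linarith)
  have hr2 : r ^ 2 = 2 * t := Real.sq_sqrt (by linarith)
  have hw2' : w ^ 2 = z ^ 2 - (r:ℂ) ^ 2 := by
    rw [hw2]
    congr 1
    rw [show ((r:ℂ))^2 = ((r^2 : ℝ) : ℂ) by push_cast; ring, hr2]
    push_cast; ring
  -- Step A: unfold withDensity
  have hd_nonneg : ∀ x : ℝ, 0 ≤ 1 / (Real.pi * Real.sqrt (2 * t - x ^ 2)) := by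
    intro x; positivity
  have hmeas : Measurable fun x : ℝ => (1 / (Real.pi * Real.sqrt (2 * t - x ^ 2))).toNNReal := by
    apply Measurable.real_toNNReal
    apply Measurable.div measurable_const
    exact (measurable_const.mul (Real.continuous_sqrt.measurable.comp
      ((measurable_const.sub (measurable_id.pow_const 2)))))
  have stepA : ∫ x : ℝ, (z - (x : ℂ))⁻¹ ∂μ
      = ∫ x in Set.Ioo (-r) r,
          ((1 / (Real.pi * Real.sqrt (2 * t - x ^ 2)) : ℝ) : ℂ) * (z - (x : ℂ))⁻¹ := by
    rw [hμ]
    rw [show (fun x : ℝ => ENNReal.ofReal (1 / (Real.pi * Real.sqrt (2 * t - x ^ 2))))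
        = fun x : ℝ => ((1 / (Real.pi * Real.sqrt (2 * t - x ^ 2))).toNNReal : ℝ≥0∞) from rfl]
    rw [integral_withDensity_eq_integral_smul hmeas]
    apply integral_congr_ae
    filter_upwards with x
    rw [NNReal.smul_def, Real.coe_toNNReal _ (hd_nonneg x), Complex.real_smul]
  -- Step B: change of variables x = r sin θ
  set g : ℝ → ℂ := fun x =>
    ((1 / (Real.pi * Real.sqrt (2 * t - x ^ 2)) : ℝ) : ℂ) * (z - (x : ℂ))⁻¹ with hg
  have himg : (fun θ : ℝ => r * Real.sin θ) '' Set.Ioo (-(π/2)) (π/2) = Set.Ioo (-r) r := by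
    ext x
    constructor
    · rintro ⟨θ, hθ, rfl⟩
      obtain ⟨h1, h2⟩ := hθ
      have hm : θ ∈ Set.Icc (-(π/2)) (π/2) := ⟨le_of_lt h1, le_of_lt h2⟩
      have hs1 : Real.sin (-(π/2)) < Real.sin θ := Real.strictMonoOn_sin
        (by constructor <;> simp [le_refl, Real.pi_pos.le] <;> linarith [Real.pi_pos]) hm h1
      have hs2 : Real.sin θ < Real.sin (π/2) := Real.strictMonoOn_sin hm
        (by constructor <;> simp [le_refl] <;> linarith [Real.pi_pos]) h2
      rw [Real.sin_pi_div_two] at hs2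
      rw [Real.sin_neg, Real.sin_pi_div_two] at hs1
      refine Set.mem_Ioo.mpr ⟨show -r < r * Real.sin θ by nlinarith,
        show r * Real.sin θ < r by nlinarith⟩
    · rintro ⟨h1, h2⟩
      refine ⟨Real.arcsin (x / r), ⟨?_, ?_⟩, ?_⟩
      · rw [show (-(π/2) : ℝ) = -(π/2) from rfl]
        exact Real.neg_pi_div_two_lt_arcsin.mpr (by rw [neg_lt, ← neg_div]; exact (div_lt_one hr).mpr (by linarith))
      · exact Real.arcsin_lt_pi_div_two.mpr ((div_lt_one hr).mpr h2)
      · show r * Real.sin (Real.arcsin (x / r)) = x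
        rw [Real.sin_arcsin (by rw [neg_le, ← neg_div]; exact (div_le_one hr).mpr (by linarith))
          ((div_le_one hr).mpr h2.le)]
        field_simp
  have hderiv : ∀ θ ∈ Set.Ioo (-(π/2)) (π/2),
      HasDerivWithinAt (fun θ : ℝ => r * Real.sin θ) (r * Real.cos θ) (Set.Ioo (-(π/2)) (π/2)) θ :=
    fun θ _ => ((Real.hasDerivAt_sin θ).const_mul r).hasDerivWithinAt
  have hinj : Set.InjOn (fun θ : ℝ => r * Real.sin θ) (Set.Ioo (-(π/2)) (π/2)) := by
    intro a ha b hb hab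
    have : Real.sin a = Real.sin b := by
      exact mul_left_cancel₀ hr.ne' hab
    exact Real.injOn_sin (Set.Ioo_subset_Icc_self ha) (Set.Ioo_subset_Icc_self hb) this
  have stepB : ∫ x in Set.Ioo (-r) r, g x
      = ∫ θ in Set.Ioo (-(π/2)) (π/2), |r * Real.cos θ| • g (r * Real.sin θ) := by
    rw [← himg]
    exact integral_image_eq_integral_abs_deriv_smul measurableSet_Ioo hderiv hinj g
  have stepC : ∫ θ in Set.Ioo (-(π/2)) (π/2), |r * Real.cos θ| • g (r * Real.sin θ)
      = ∫ θ in Set.Ioo (-(π/2)) (π/2), ((π:ℝ):ℂ)⁻¹ * (z - ((r * Real.sin θ : ℝ) : ℂ))⁻¹ := by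
    apply setIntegral_congr_fun measurableSet_Ioo
    intro θ hθ
    have hcos : 0 < Real.cos θ := Real.cos_pos_of_mem_Ioo hθ
    have hrc : 0 < r * Real.cos θ := mul_pos hr hcos
    have hsq : Real.sqrt (2 * t - (r * Real.sin θ) ^ 2) = r * Real.cos θ := by
      rw [show 2 * t - (r * Real.sin θ) ^ 2 = (r * Real.cos θ)^2 by
        rw [← hr2]; have := Real.sin_sq_add_cos_sq θ; nlinarith]
      exact Real.sqrt_sq hrc.le
    simp only [hg, hsq, abs_of_pos hrc]
    rw [Complex.real_smul]
    push_cast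
    have hπ : ((π:ℝ):ℂ) ≠ 0 := by exact_mod_cast Real.pi_ne_zero
    have hrc' : ((r * Real.cos θ : ℝ):ℂ) ≠ 0 := by exact_mod_cast hrc.ne'
    push_cast at hrc'
    field_simp
    rw [div_mul_cancel_left₀ hrc', one_div]
  have stepD : ∫ θ in Set.Ioo (-(π/2)) (π/2), ((π:ℝ):ℂ)⁻¹ * (z - ((r * Real.sin θ : ℝ) : ℂ))⁻¹
      = ((π:ℝ):ℂ)⁻¹ * (π / w) := by
    rw [integral_const_mul]
    congr 1
    rw [← MeasureTheory.integral_Ioc_eq_integral_Ioo,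
      ← intervalIntegral.integral_of_le (by linarith [Real.pi_pos] : -(π/2) ≤ π/2)]
    exact aux_half r hr z w hz hw hw2'
  rw [stepA, stepB, stepC, stepD]
  have hπ : ((π:ℝ):ℂ) ≠ 0 := by exact_mod_cast Real.pi_ne_zero
  have hw0 : w ≠ 0 := by intro h; rw [h] at hw; simp at hw
  field_simp
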